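/- arXiv:2108.01523 — 3 statements merged into one kernel-verified Lean document; each statement's English description precedes it below -/
import Mathlib

section
/- Let c ∈ ℝ and let the density g on (0,∞) satisfy g ∈ L¹((0,∞), x^{c−1}) and assumption [G1] with parameter γ > 0. Then for every r > max(0, γ^{−1} − 1) there exist constants c_{g,r}, C_{g,r} > 0 depending only on g and r such that for all k ≥ 1, c_{g,r} k^{2+1/γ} ≤ ∫_ℝ |R_k(t)|² dt ≤ C_{g,r} k^{2+1/γ}, where R_k := R_{k,0,r}. -/
open MeasureTheory Set Filter Finset
open scoped Real NNReal ENNReal Topology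

noncomputable section

namespace MultDeconv

/-- Multiplicative convolution of complex-valued functions on `(0,∞)`. -/
def mConv (h₁ h₂ : ℝ → ℂ) (y : ℝ) : ℂ :=
  ∫ x in Ioi (0 : ℝ), h₁ (y / x) * h₂ x / (x : ℂ)

/-- Multiplicative convolution of real-valued functions on `(0,∞)`. -/
def mConvR (h₁ h₂ : ℝ → ℝ) (y : ℝ) : ℝ :=
  ∫ x in Ioi (0 : ℝ), h₁ (y / x) * h₂ x / x

/-- Mellin transform at development point `c`. -/
def mellinT (c : ℝ) (h : ℝ → ℂ) (t : ℝ) : ℂ :=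
  ∫ x in Ioi (0 : ℝ), (x : ℂ) ^ ((c : ℂ) - 1 + (t : ℂ) * Complex.I) * h x

/-- `h ∈ L¹((0,∞), x^{c-1})`. -/
def MemL1w (c : ℝ) (h : ℝ → ℂ) : Prop :=
  IntegrableOn (fun x => h x * ((x ^ (c - 1) : ℝ) : ℂ)) (Ioi 0)

/-- the squared weighted L²-norm `‖h‖²_{x^{2c-1}}` -/
def wNormSq (c : ℝ) (h : ℝ → ℂ) : ℝ :=
  ∫ x in Ioi (0 : ℝ), ‖h x‖ ^ 2 * x ^ (2 * c - 1)

/-- `h ∈ L²((0,∞), x^{2c-1})`. -/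
def MemL2w (c : ℝ) (h : ℝ → ℂ) : Prop :=
  AEStronglyMeasurable h (volume.restrict (Ioi 0)) ∧
    IntegrableOn (fun x => ‖h x‖ ^ 2 * x ^ (2 * c - 1)) (Ioi 0)

/-- a probability density on `(0,∞)` -/
def IsDensity (f : ℝ → ℝ) : Prop :=
  Measurable f ∧ (∀ x, 0 ≤ f x) ∧ (∀ x, x ≤ 0 → f x = 0) ∧
    (∫ x in Ioi (0 : ℝ), f x) = 1

def toC (f : ℝ → ℝ) : ℝ → ℂ := fun x => (f x : ℂ)

/-- the ridge factor `R_{k,ξ,r}` -/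
def ridgeR (c : ℝ) (g : ℝ → ℝ) (r ξ k : ℝ) (t : ℝ) : ℂ :=
  mellinT c (toC g) (-t) * ((‖mellinT c (toC g) t‖ ^ r : ℝ) : ℂ) /
    (((max (‖mellinT c (toC g) t‖) (k⁻¹ * (1 + |t|) ^ ξ)) ^ (r + 2) : ℝ) : ℂ)

/-- the set `G_k` -/
def Gset (c : ℝ) (g : ℝ → ℝ) (ξ k : ℝ) : Set ℝ :=
  {t | k⁻¹ * (1 + |t|) ^ ξ > ‖mellinT c (toC g) t‖}

/-- the law of `Y = X·U`, whose density is the multiplicative convolution `f*g` -/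
def lawY (f g : ℝ → ℝ) : Measure ℝ :=
  (volume.restrict (Ioi 0)).withDensity fun y => ENNReal.ofReal (mConvR f g y)

/-- the joint law of the i.i.d. sample `Y₁,…,Y_n` -/
def sampleLaw (n : ℕ) (f g : ℝ → ℝ) : Measure (Fin n → ℝ) :=
  Measure.pi fun _ => lawY f g

/-- the empirical Mellin transform -/
def empMellin (c : ℝ) {n : ℕ} (y : Fin n → ℝ) (t : ℝ) : ℂ :=
  (n : ℂ)⁻¹ * ∑ j, ((y j : ℂ)) ^ ((c : ℂ) - 1 + (t : ℂ) * Complex.I)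

/-- the ridge estimator `f̂_{k,ξ,r}` -/
def ridgeEst (c : ℝ) (g : ℝ → ℝ) (r ξ k : ℝ) {n : ℕ} (y : Fin n → ℝ) (x : ℝ) : ℂ :=
  (((2 * π)⁻¹ : ℝ) : ℂ) *
    ∫ t : ℝ, (x : ℂ) ^ (-(c : ℂ) - (t : ℂ) * Complex.I) * empMellin c y t * ridgeR c g r ξ k t

/-- Assumption [G1] -/
def AssumptionG1 (c : ℝ) (g : ℝ → ℝ) (cg Cg γ : ℝ) : Prop :=
  0 < cg ∧ 0 < Cg ∧ 0 < γ ∧ ∀ t : ℝ,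
    cg * (1 + t ^ 2) ^ (-γ / 2) ≤ ‖mellinT c (toC g) t‖ ∧
      ‖mellinT c (toC g) t‖ ≤ Cg * (1 + t ^ 2) ^ (-γ / 2)

/-- the global risk of the ridge estimator -/
def riskRidge (c : ℝ) (f g : ℝ → ℝ) (r ξ k : ℝ) (n : ℕ) : ℝ :=
  ∫ y, wNormSq c (fun x => (f x : ℂ) - ridgeEst c g r ξ k y x) ∂(sampleLaw n f g)

/-- `‖R_{k,ξ,r}‖²_{L²(ℝ)}` -/
def RnormSq (c : ℝ) (g : ℝ → ℝ) (r ξ k : ℝ) : ℝ :=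
  ∫ t : ℝ, ‖ridgeR c g r ξ k t‖ ^ 2

/-- `σ_c = E(Y₁^{2(c-1)})` -/
def sigmaC (c : ℝ) (f g : ℝ → ℝ) : ℝ := ∫ y, y ^ (2 * (c - 1)) ∂(lawY f g)

/-- the function `t ↦ |M_c[g](t)|^{r+1}(1+|t|)^{-ξ(r+2)}` -/
def ridgeIntegrand (c : ℝ) (g : ℝ → ℝ) (r ξ : ℝ) (t : ℝ) : ℝ :=
  ‖mellinT c (toC g) t‖ ^ (r + 1) * (1 + |t|) ^ (-(ξ * (r + 2)))

/-- Mellin--Sobolev ellipsoid `𝔻^s_c(L)` -/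
def MemSobolevD (c s L : ℝ) (f : ℝ → ℝ) : Prop :=
  IsDensity f ∧ MemL1w c (toC f) ∧ MemL2w c (toC f) ∧
    Integrable (fun t : ℝ => (1 + t ^ 2) ^ s * ‖mellinT c (toC f) t‖ ^ 2) ∧
    (∫ t : ℝ, (1 + t ^ 2) ^ s * ‖mellinT c (toC f) t‖ ^ 2) ≤ L ∧
    IntegrableOn (fun x => x ^ (2 * (c - 1)) * f x) (Ioi 0) ∧
    (∫ x in Ioi (0 : ℝ), x ^ (2 * (c - 1)) * f x) ≤ L

/-- the collection `𝒦_n` of admissible ridge parameters -/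
def Kn (c : ℝ) (g : ℝ → ℝ) (r : ℝ) (n : ℕ) : Set ℕ :=
  {k | 1 ≤ k ∧ RnormSq c g r 0 (k : ℝ) ≤ (n : ℝ)}

/-- empirical second-moment estimator `σ̂_c` -/
def sigmaHat (c : ℝ) {n : ℕ} (y : Fin n → ℝ) : ℝ :=
  (n : ℝ)⁻¹ * ∑ j, (y j) ^ (2 * (c - 1))

/-- empirical penalty `V̂(k)` -/
def Vhat (c : ℝ) (g : ℝ → ℝ) (r : ℝ) {n : ℕ} (y : Fin n → ℝ) (k : ℕ) : ℝ :=
  2 * sigmaHat c y * RnormSq c g r 0 (k : ℝ) / (n : ℝ)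

/-- deterministic penalty `V(k)` -/
def Vfun (c : ℝ) (f g : ℝ → ℝ) (r : ℝ) (n : ℕ) (k : ℕ) : ℝ :=
  sigmaC c f g * RnormSq c g r 0 (k : ℝ) / (n : ℝ)

/-- comparison term `Â(k)` of the Goldenshluger--Lepski method -/
def Ahat (c : ℝ) (g : ℝ → ℝ) (r χ₁ : ℝ) (n : ℕ) (y : Fin n → ℝ) (k : ℕ) : ℝ :=
  ⨆ k' ∈ Kn c g r n,
    max (wNormSq c (fun x => ridgeEst c g r 0 ((k' : ℕ) : ℝ) y x -
            ridgeEst c g r 0 (((min k' k : ℕ)) : ℝ) y x) - χ₁ * Vhat c g r y k') 0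

/-- `k̂` is a minimiser of `Â + χ₂ V̂` over `𝒦_n` -/
def IsGLMinimiser (c : ℝ) (g : ℝ → ℝ) (r χ₁ χ₂ : ℝ) (n : ℕ)
    (khat : (Fin n → ℝ) → ℕ) : Prop :=
  ∀ y : Fin n → ℝ, khat y ∈ Kn c g r n ∧ ∀ k ∈ Kn c g r n,
    Ahat c g r χ₁ n y (khat y) + χ₂ * Vhat c g r y (khat y) ≤
      Ahat c g r χ₁ n y k + χ₂ * Vhat c g r y k


private lemma sq_rpow {x : ℝ} (hx : 0 < x) (y : ℝ) : (x ^ y) ^ 2 = x ^ (2 * y) := by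
  rw [sq, ← Real.rpow_add hx, two_mul]

private lemma pow_two_rpow {x : ℝ} (hx : 0 ≤ x) (y : ℝ) : (x ^ 2) ^ y = x ^ (2 * y) := by
  rw [← Real.rpow_natCast x 2, ← Real.rpow_mul hx]
  norm_num

lemma mellinT_continuous {c : ℝ} {g : ℝ → ℝ} (hg : Measurable g)
    (hg1 : MemL1w c (toC g)) : Continuous (mellinT c (toC g)) := by
  unfold mellinT
  apply continuous_of_dominated (bound := fun x => ‖toC g x * ((x ^ (c - 1) : ℝ) : ℂ)‖)
  · intro t
    refine AEStronglyMeasurable.mul ?_ ?_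
    · refine ContinuousOn.aestronglyMeasurable ?_ measurableSet_Ioi
      intro x hx
      exact (Complex.continuousAt_ofReal_cpow_const x _
        (Or.inr (ne_of_gt hx))).continuousWithinAt
    · exact (Complex.measurable_ofReal.comp hg).aestronglyMeasurable
  · intro t
    filter_upwards [ae_restrict_mem measurableSet_Ioi] with x hx
    have hx0 : (0:ℝ) < x := hx
    have h1 : ‖(x : ℂ) ^ ((c : ℂ) - 1 + (t : ℂ) * Complex.I)‖ = x ^ (c - 1) := by
      rw [Complex.norm_cpow_eq_rpow_re_of_pos hx0]
      norm_num
    have h2 : ‖((x ^ (c - 1) : ℝ) : ℂ)‖ = x ^ (c - 1) := by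
      rw [Complex.norm_real, Real.norm_of_nonneg (Real.rpow_nonneg hx0.le _)]
    rw [norm_mul, norm_mul, h1, h2, mul_comm]
  · exact hg1.norm
  · filter_upwards [ae_restrict_mem measurableSet_Ioi] with x hx
    have hx0 : (x : ℂ) ≠ 0 := by
      simpa using ne_of_gt (show (0:ℝ) < x from hx)
    exact ((continuous_const.add (Complex.continuous_ofReal.mul
      continuous_const)).const_cpow (Or.inl hx0)).mul continuous_const

set_option maxHeartbeats 1000000 in
/-- Under [G1], for `r > max(0, γ⁻¹ − 1)` the squared `L²`-norm of the
ridge factor `R_k = R_{k,0,r}` is of exact order `k^{2+1/γ}`. -/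
theorem ridgeR_norm_order (c : ℝ) (g : ℝ → ℝ) (cg Cg γ r : ℝ)
    (hg : IsDensity g) (hg1 : MemL1w c (toC g))
    (hG1 : AssumptionG1 c g cg Cg γ)
    (hr : max 0 (γ⁻¹ - 1) < r) :
    ∃ c₁ C₁ : ℝ, 0 < c₁ ∧ 0 < C₁ ∧ ∀ k : ℝ, 1 ≤ k →
      c₁ * k ^ (2 + 1 / γ) ≤ RnormSq c g r 0 k ∧
        RnormSq c g r 0 k ≤ C₁ * k ^ (2 + 1 / γ) := by

  obtain ⟨hcg, hCg, hγ, hG⟩ := hG1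
  have hr0 : 0 < r := (le_max_left 0 (γ⁻¹ - 1)).trans_lt hr
  have hγ' : γ⁻¹ - 1 < r := (le_max_right 0 (γ⁻¹ - 1)).trans_lt hr
  set q : ℝ := γ * (r + 1) with hq_def
  have hq1 : 1 < q := by
    have h1 : γ⁻¹ < r + 1 := by linarith
    have h2 := (mul_lt_mul_iff_right₀ hγ).mpr h1
    rwa [mul_inv_cancel₀ hγ.ne'] at h2
  have hq0 : 0 < q := lt_trans one_pos hq1
  have h2q : -(2*q) < -1 := by linarith
  have h2q1 : (0:ℝ) < 2*q - 1 := by linarith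
  set M : ℝ → ℝ := fun t => ‖mellinT c (toC g) t‖ with hM_def
  have hMcont : Continuous M := continuous_norm.comp (mellinT_continuous hg.1 hg1)
  have h1t : ∀ t : ℝ, (0:ℝ) < 1 + t ^ 2 := fun t => by positivity
  have h1t1 : ∀ t : ℝ, (1:ℝ) ≤ 1 + t ^ 2 := fun t => by have h := sq_nonneg t; linarith
  set w : ℝ → ℝ := fun t => (1 + t ^ 2) ^ (-γ/2) with hw_def
  have hwpos : ∀ t, 0 < w t := fun t => Real.rpow_pos_of_pos (h1t t) _
  have hwneg : ∀ t : ℝ, w (-t) = w t := fun t => by simp only [hw_def, neg_sq]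
  have hMl : ∀ t, cg * w t ≤ M t := fun t => (hG t).1
  have hMu : ∀ t, M t ≤ Cg * w t := fun t => (hG t).2
  have hMpos : ∀ t, 0 < M t := fun t => lt_of_lt_of_le (by positivity) (hMl t)
  set Cg' : ℝ := max Cg 1 with hCg'_def
  have hCg'1 : (1:ℝ) ≤ Cg' := le_max_right _ _
  have hCg'0 : (0:ℝ) < Cg' := lt_of_lt_of_le one_pos hCg'1
  set A : ℝ := (Cg ^ (r+1) / cg ^ (r+2)) ^ 2 with hA_def
  set B : ℝ := (Cg ^ (r+1)) ^ 2 with hB_def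
  set b : ℝ := (cg ^ (r+1)) ^ 2 * 2 ^ (-q) with hb_def
  have hApos : 0 < A := by
    have h1 : (0:ℝ) < Cg ^ (r+1) := Real.rpow_pos_of_pos hCg _
    have h2 : (0:ℝ) < cg ^ (r+2) := Real.rpow_pos_of_pos hcg _
    positivity
  have hBpos : 0 < B := by
    have h1 : (0:ℝ) < Cg ^ (r+1) := Real.rpow_pos_of_pos hCg _
    positivity
  have hbpos : 0 < b := by
    have h1 : (0:ℝ) < cg ^ (r+1) := Real.rpow_pos_of_pos hcg _
    have h2 : (0:ℝ) < (2:ℝ) ^ (-q) := Real.rpow_pos_of_pos two_pos _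
    positivity
  have hCgq : (0:ℝ) < Cg' ^ ((1/γ) * (1 - 2*q)) := Real.rpow_pos_of_pos hCg'0 _
  refine ⟨b * Cg' ^ ((1/γ) * (1 - 2*q)) / (2*q - 1),
    2 ^ (γ+1) * A + 2 * (B / (2*q - 1)), by positivity, ?_, ?_⟩
  · have h1 : (0:ℝ) < (2:ℝ) ^ (γ+1) := Real.rpow_pos_of_pos two_pos _
    positivity
  intro k hk
  have hk0 : (0:ℝ) < k := lt_of_lt_of_le one_pos hk
  have hkinv : (0:ℝ) < k⁻¹ := inv_pos.mpr hk0
  have hmax : ∀ t, 0 < max (M t) k⁻¹ := fun t => (hMpos t).trans_le (le_max_left _ _)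
  set N : ℝ → ℝ := fun t => M (-t) * M t ^ r / (max (M t) k⁻¹) ^ (r + 2) with hN_def
  have hNnn : ∀ t, 0 ≤ N t := fun t =>
    div_nonneg (mul_nonneg (hMpos (-t)).le (Real.rpow_nonneg (hMpos t).le r))
      (Real.rpow_nonneg (hmax t).le _)
  have hNeq : ∀ t, ‖ridgeR c g r 0 k t‖ = N t := by
    intro t
    have h1 : |M t ^ r| = M t ^ r := abs_of_nonneg (Real.rpow_nonneg (hMpos t).le r)
    have h2 : |(M t ⊔ k⁻¹) ^ (r+2)| = (M t ⊔ k⁻¹) ^ (r+2) :=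
      abs_of_nonneg (Real.rpow_nonneg (hmax t).le (r+2))
    simp only [ridgeR, Real.rpow_zero, mul_one, norm_div, norm_mul,
      Complex.norm_real, Real.norm_eq_abs, h1, h2]
    exact congrArg₂ (· / ·) (congrArg (_ * ·) h1) h2
  have hRS : RnormSq c g r 0 k = ∫ t, N t ^ 2 := by
    unfold RnormSq
    simp only [hNeq]
  -- pointwise upper bound 1
  have hN1 : ∀ t, N t ≤ (Cg ^ (r+1) / cg ^ (r+2)) * (1 + t ^ 2) ^ (γ/2) := by
    intro t
    have hwt := hwpos t
    have e1 : N t ≤ (Cg * w t) * (Cg * w t) ^ r / (cg * w t) ^ (r+2) := by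
      apply div_le_div₀ (by positivity) ?_ (Real.rpow_pos_of_pos (by positivity) _) ?_
      · have h3 : M (-t) ≤ Cg * w t := by rw [← hwneg t]; exact hMu (-t)
        exact mul_le_mul h3 (Real.rpow_le_rpow (hMpos t).le (hMu t) hr0.le)
          (Real.rpow_nonneg (hMpos t).le r) (by positivity)
      · exact Real.rpow_le_rpow (by positivity) ((hMl t).trans (le_max_left _ _))
          (by linarith)
    have e2 : (Cg * w t) * (Cg * w t) ^ r / (cg * w t) ^ (r+2)
        = (Cg ^ (r+1) / cg ^ (r+2)) * (w t)⁻¹ := by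
      rw [Real.mul_rpow hCg.le hwt.le, Real.mul_rpow hcg.le hwt.le]
      have hCgr : Cg * Cg ^ r = Cg ^ (r+1) := by
        rw [Real.rpow_add hCg, Real.rpow_one]; ring
      have hwr : w t * w t ^ r = w t ^ (r+1) := by
        rw [Real.rpow_add hwt, Real.rpow_one]; ring
      have hw2 : w t ^ (r+2) = w t ^ (r+1) * w t := by
        rw [show r+2 = (r+1)+1 by ring, Real.rpow_add hwt, Real.rpow_one]
      have hcg2 : (0:ℝ) < cg ^ (r+2) := Real.rpow_pos_of_pos hcg _
      have hwr1 : (0:ℝ) < w t ^ (r+1) := Real.rpow_pos_of_pos hwt _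
      calc (Cg * w t) * (Cg ^ r * w t ^ r) / (cg ^ (r+2) * w t ^ (r+2))
          = (Cg * Cg ^ r) * (w t * w t ^ r) / (cg ^ (r+2) * w t ^ (r+2)) := by ring
        _ = Cg ^ (r+1) * w t ^ (r+1) / (cg ^ (r+2) * (w t ^ (r+1) * w t)) := by
            rw [hCgr, hwr, hw2]
        _ = (Cg ^ (r+1) / cg ^ (r+2)) * (w t)⁻¹ := by
            field_simp
    have e3 : (w t)⁻¹ = (1 + t ^ 2) ^ (γ/2) := by
      rw [show w t = (1 + t ^ 2) ^ (-γ/2) from rfl,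
        show -γ/2 = -(γ/2) by ring, Real.rpow_neg (h1t t).le, inv_inv]
    rw [e2, e3] at e1
    exact e1
  have hS1 : ∀ t, N t ^ 2 ≤ A * (1 + t ^ 2) ^ γ := by
    intro t
    have h := pow_le_pow_left₀ (hNnn t) (hN1 t) 2
    calc N t ^ 2 ≤ ((Cg ^ (r+1) / cg ^ (r+2)) * (1 + t ^ 2) ^ (γ/2)) ^ 2 := h
      _ = A * (1 + t ^ 2) ^ γ := by
          rw [mul_pow, sq_rpow (h1t t), show 2*(γ/2) = γ by ring, hA_def]
  -- pointwise upper bound 2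
  have hN2 : ∀ t, N t ≤ (Cg ^ (r+1) * k ^ (r+2)) * (1 + t ^ 2) ^ ((-γ/2)*(r+1)) := by
    intro t
    have hwt := hwpos t
    have e1 : N t ≤ (Cg * w t) * (Cg * w t) ^ r / (k⁻¹) ^ (r+2) := by
      apply div_le_div₀ (by positivity) ?_ (Real.rpow_pos_of_pos hkinv _) ?_
      · have h3 : M (-t) ≤ Cg * w t := by rw [← hwneg t]; exact hMu (-t)
        exact mul_le_mul h3 (Real.rpow_le_rpow (hMpos t).le (hMu t) hr0.le)
          (Real.rpow_nonneg (hMpos t).le r) (by positivity)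
      · exact Real.rpow_le_rpow hkinv.le (le_max_right _ _) (by linarith)
    have e2 : (Cg * w t) * (Cg * w t) ^ r / (k⁻¹) ^ (r+2)
        = (Cg ^ (r+1) * k ^ (r+2)) * w t ^ (r+1) := by
      rw [Real.mul_rpow hCg.le hwt.le, Real.inv_rpow hk0.le, div_eq_mul_inv, inv_inv]
      have hCgr : Cg * Cg ^ r = Cg ^ (r+1) := by
        rw [Real.rpow_add hCg, Real.rpow_one]; ring
      have hwr : w t * w t ^ r = w t ^ (r+1) := by
        rw [Real.rpow_add hwt, Real.rpow_one]; ring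
      calc (Cg * w t) * (Cg ^ r * w t ^ r) * k ^ (r+2)
          = (Cg * Cg ^ r) * (w t * w t ^ r) * k ^ (r+2) := by ring
        _ = (Cg ^ (r+1) * k ^ (r+2)) * w t ^ (r+1) := by rw [hCgr, hwr]; ring
    have e3 : w t ^ (r+1) = (1 + t ^ 2) ^ ((-γ/2)*(r+1)) := by
      rw [show w t = (1 + t ^ 2) ^ (-γ/2) from rfl]
      exact (Real.rpow_mul (h1t t).le _ _).symm
    rw [e2, e3] at e1
    exact e1
  have hS2 : ∀ t, N t ^ 2 ≤ (B * k ^ (2*(r+2))) * (1 + t ^ 2) ^ (-q) := by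
    intro t
    have h := pow_le_pow_left₀ (hNnn t) (hN2 t) 2
    calc N t ^ 2 ≤ ((Cg ^ (r+1) * k ^ (r+2)) * (1 + t ^ 2) ^ ((-γ/2)*(r+1))) ^ 2 := h
      _ = (B * k ^ (2*(r+2))) * (1 + t ^ 2) ^ (-q) := by
          rw [mul_pow, mul_pow, sq_rpow hk0, sq_rpow (h1t t),
            show 2*((-γ/2)*(r+1)) = -q by rw [hq_def]; ring, hB_def]
  -- integrability
  have haux_cont : Continuous (fun t : ℝ => (1 + t ^ 2) ^ (-q)) := by
    apply Continuous.rpow_const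
    · continuity
    · exact fun t => Or.inl (h1t t).ne'
  have haux_int : Integrable (fun t : ℝ => (1 + t ^ 2) ^ (-q)) := by
    apply Integrable.mono' integrable_inv_one_add_sq haux_cont.aestronglyMeasurable
    filter_upwards with t
    rw [Real.norm_of_nonneg (Real.rpow_nonneg (h1t t).le _), ← Real.rpow_neg_one]
    exact Real.rpow_le_rpow_of_exponent_le (h1t1 t) (by linarith)
  have hBfint : Integrable (fun t : ℝ => (B * k ^ (2*(r+2))) * (1 + t ^ 2) ^ (-q)) :=
    haux_int.const_mul _
  have hNcont : Continuous N := by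
    apply Continuous.div
    · exact (hMcont.comp continuous_neg).mul
        (hMcont.rpow_const (fun t => Or.inl (hMpos t).ne'))
    · exact (hMcont.max continuous_const).rpow_const (fun t => Or.inl (hmax t).ne')
    · exact fun t => (Real.rpow_pos_of_pos (hmax t) _).ne'
  have hSint : Integrable (fun t => N t ^ 2) := by
    apply Integrable.mono' hBfint (hNcont.pow 2).aestronglyMeasurable
    filter_upwards with t
    rw [Pi.pow_apply, Real.norm_of_nonneg (sq_nonneg (N t))]
    exact hS2 t
  -- the threshold T for the upper bound
  set T : ℝ := k ^ (1/γ) with hT_def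
  have hT0 : 0 < T := Real.rpow_pos_of_pos hk0 _
  have hT1 : 1 ≤ T := Real.one_le_rpow hk (by positivity)
  have hTk : T ^ (2*γ + 1) = k ^ (2 + 1/γ) := by
    rw [hT_def, ← Real.rpow_mul hk0.le]
    congr 1
    field_simp
    try ring
  have hTk2 : k ^ (2*(r+2)) * T ^ (1 - 2*q) = k ^ (2 + 1/γ) := by
    rw [hT_def, ← Real.rpow_mul hk0.le, ← Real.rpow_add hk0]
    congr 1
    rw [hq_def]
    field_simp
    try ring
  have hsplit : (∫ t, N t ^ 2)
      = (∫ t in Icc (-T) T, N t ^ 2) + ∫ t in (Icc (-T) T)ᶜ, N t ^ 2 :=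
    (integral_add_compl measurableSet_Icc hSint).symm
  have hIcc : (∫ t in Icc (-T) T, N t ^ 2) ≤ 2 ^ (γ+1) * A * k ^ (2 + 1/γ) := by
    have h1 : (∫ t in Icc (-T) T, N t ^ 2)
        ≤ ∫ _ in Icc (-T) T, A * (1 + T ^ 2) ^ γ := by
      apply setIntegral_mono_on hSint.integrableOn
        (integrableOn_const measure_Icc_lt_top.ne) measurableSet_Icc
      intro t ht
      refine (hS1 t).trans ?_
      have ht2 : t ^ 2 ≤ T ^ 2 := sq_le_sq' (by linarith [ht.1]) ht.2
      exact mul_le_mul_of_nonneg_left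
        (Real.rpow_le_rpow (h1t t).le (by linarith) hγ.le) hApos.le
    rw [setIntegral_const, smul_eq_mul, Real.volume_real_Icc_of_le (by linarith)] at h1
    have h2 : (T - -T) * (A * (1 + T ^ 2) ^ γ) ≤ 2 ^ (γ+1) * A * k ^ (2 + 1/γ) := by
      have e1 : (1 + T ^ 2) ^ γ ≤ (2 * T ^ 2) ^ γ := by
        apply Real.rpow_le_rpow (h1t T).le ?_ hγ.le
        have h5 : (1:ℝ) ≤ T ^ 2 := by
          calc (1:ℝ) = 1 * 1 := by ring
            _ ≤ T * T := mul_le_mul hT1 hT1 zero_le_one (by linarith)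
            _ = T ^ 2 := (sq T).symm
        linarith
      have e2 : (2 * T ^ 2) ^ γ = 2 ^ γ * T ^ (2*γ) := by
        rw [Real.mul_rpow (by norm_num) (sq_nonneg T), pow_two_rpow hT0.le]
      have e3 : (T - -T) * (A * (2 ^ γ * T ^ (2*γ))) = 2 ^ (γ+1) * A * T ^ (2*γ+1) := by
        rw [Real.rpow_add two_pos, Real.rpow_one, Real.rpow_add hT0, Real.rpow_one]
        ring
      calc (T - -T) * (A * (1 + T ^ 2) ^ γ)
          ≤ (T - -T) * (A * (2 * T ^ 2) ^ γ) := by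
            apply mul_le_mul_of_nonneg_left ?_ (by linarith)
            exact mul_le_mul_of_nonneg_left e1 hApos.le
        _ = 2 ^ (γ+1) * A * T ^ (2*γ+1) := by rw [e2]; exact e3
        _ = 2 ^ (γ+1) * A * k ^ (2 + 1/γ) := by rw [hTk]
    exact h1.trans h2
  have htail_int : IntegrableOn (fun t : ℝ => (B * k ^ (2*(r+2))) * t ^ (-(2*q)))
      (Ioi T) := (integrableOn_Ioi_rpow_of_lt h2q hT0).const_mul _
  have htail : (∫ t in Ioi T, (B * k ^ (2*(r+2))) * (1 + t ^ 2) ^ (-q))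
      ≤ (B * k ^ (2*(r+2))) * (T ^ (1 - 2*q) / (2*q - 1)) := by
    have h2 : (∫ t in Ioi T, (B * k ^ (2*(r+2))) * (1 + t ^ 2) ^ (-q))
        ≤ ∫ t in Ioi T, (B * k ^ (2*(r+2))) * t ^ (-(2*q)) := by
      apply setIntegral_mono_on hBfint.integrableOn htail_int measurableSet_Ioi
      intro t ht
      have ht0 : 0 < t := hT0.trans ht
      apply mul_le_mul_of_nonneg_left ?_ (by positivity)
      have h3 : (1 + t ^ 2) ^ (-q) ≤ (t ^ 2) ^ (-q) :=
        Real.rpow_le_rpow_of_nonpos (by positivity) (by linarith) (by linarith)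
      rwa [pow_two_rpow ht0.le, show (2:ℝ)*(-q) = -(2*q) by ring] at h3
    have hval : (∫ t in Ioi T, (B * k ^ (2*(r+2))) * t ^ (-(2*q)))
        = (B * k ^ (2*(r+2))) * (T ^ (1 - 2*q) / (2*q - 1)) := by
      rw [integral_const_mul, integral_Ioi_rpow_of_lt h2q hT0]
      congr 1
      rw [show -(2*q)+1 = 1-2*q by ring]
      rw [div_eq_div_iff (by linarith) (by linarith : (2*q-1 : ℝ) ≠ 0)]
      ring
    exact h2.trans (le_of_eq hval)
  have hcompl : (∫ t in (Icc (-T) T)ᶜ, N t ^ 2)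
      ≤ 2 * (B / (2*q - 1)) * k ^ (2 + 1/γ) := by
    have h1 : (∫ t in (Icc (-T) T)ᶜ, N t ^ 2)
        ≤ ∫ t in (Icc (-T) T)ᶜ, (B * k ^ (2*(r+2))) * (1 + t ^ 2) ^ (-q) :=
      setIntegral_mono_on hSint.integrableOn hBfint.integrableOn
        measurableSet_Icc.compl (fun t _ => hS2 t)
    have hdisj : Disjoint (Iio (-T)) (Ioi T) := by
      rw [Set.disjoint_left]
      intro x hx1 hx2
      simp only [Set.mem_Iio] at hx1
      simp only [Set.mem_Ioi] at hx2
      linarith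
    have hcompl_eq : (Icc (-T) T)ᶜ = Iio (-T) ∪ Ioi T := by
      ext x
      simp only [Set.mem_compl_iff, Set.mem_Icc, Set.mem_union, Set.mem_Iio,
        Set.mem_Ioi, not_and_or, not_le]
    rw [hcompl_eq,
      setIntegral_union hdisj measurableSet_Ioi hBfint.integrableOn
        hBfint.integrableOn] at h1
    have hneg : (∫ t in Iio (-T), (B * k ^ (2*(r+2))) * (1 + t ^ 2) ^ (-q))
        = ∫ t in Ioi T, (B * k ^ (2*(r+2))) * (1 + t ^ 2) ^ (-q) := by
      have h5 := integral_comp_neg_Iic (-T)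
        (fun t : ℝ => (B * k ^ (2*(r+2))) * (1 + t ^ 2) ^ (-q))
      simp only [neg_neg, neg_sq] at h5
      rw [← integral_Iic_eq_integral_Iio, h5]
    rw [hneg] at h1
    have h4 : (∫ t in Ioi T, (B * k ^ (2*(r+2))) * (1 + t ^ 2) ^ (-q))
        + (∫ t in Ioi T, (B * k ^ (2*(r+2))) * (1 + t ^ 2) ^ (-q))
        ≤ 2 * ((B * k ^ (2*(r+2))) * (T ^ (1 - 2*q) / (2*q - 1))) := by
      linarith [htail]
    rw [hcompl_eq]
    refine h1.trans (h4.trans (le_of_eq ?_))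
    rw [show 2 * ((B * k ^ (2*(r+2))) * (T ^ (1 - 2*q) / (2*q - 1)))
        = 2 * (B / (2*q - 1)) * (k ^ (2*(r+2)) * T ^ (1 - 2*q)) by ring, hTk2]
  -- lower bound
  set T' : ℝ := (Cg' * k) ^ (1/γ) with hT'_def
  have hCk0 : (0:ℝ) < Cg' * k := by positivity
  have hCk1 : (1:ℝ) ≤ Cg' * k := le_trans hCg'1 (le_mul_of_one_le_right hCg'0.le hk)
  have hT'0 : 0 < T' := Real.rpow_pos_of_pos hCk0 _
  have hT'1 : 1 ≤ T' := Real.one_le_rpow hCk1 (by positivity)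
  have hT'g : T' ^ (-γ) = (Cg' * k)⁻¹ := by
    rw [hT'_def, ← Real.rpow_mul hCk0.le, show (1/γ)*(-γ) = -1 by field_simp,
      Real.rpow_neg_one]
  have hsmall : ∀ t ∈ Ioi T', max (M t) k⁻¹ = k⁻¹ := by
    intro t ht
    have ht' : T' < t := ht
    have ht0 : 0 < t := hT'0.trans ht'
    apply max_eq_right
    have h1 : w t ≤ t ^ (-γ) := by
      have h3 : (1 + t ^ 2) ^ (-γ/2) ≤ (t ^ 2) ^ (-γ/2) :=
        Real.rpow_le_rpow_of_nonpos (by positivity) (by linarith) (by linarith)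
      rw [show w t = (1 + t ^ 2) ^ (-γ/2) from rfl]
      rwa [pow_two_rpow ht0.le, show (2:ℝ)*(-γ/2) = -γ by ring] at h3
    have h2 : t ^ (-γ) ≤ T' ^ (-γ) :=
      Real.rpow_le_rpow_of_nonpos hT'0 ht'.le (by linarith)
    have h3 : M t ≤ Cg * (Cg' * k)⁻¹ := by
      calc M t ≤ Cg * w t := hMu t
        _ ≤ Cg * (Cg' * k)⁻¹ := by
            rw [← hT'g]
            exact mul_le_mul_of_nonneg_left (h1.trans h2) hCg.le
    refine h3.trans ?_
    rw [mul_inv]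
    calc Cg * (Cg'⁻¹ * k⁻¹) = (Cg / Cg') * k⁻¹ := by ring
      _ ≤ 1 * k⁻¹ := by
          apply mul_le_mul_of_nonneg_right ?_ hkinv.le
          rw [div_le_one hCg'0]
          exact le_max_left _ _
      _ = k⁻¹ := one_mul _
  have hlow : ∀ t ∈ Ioi T', (b * k ^ (2*(r+2))) * t ^ (-(2*q)) ≤ N t ^ 2 := by
    intro t ht
    have ht' : T' < t := ht
    have ht0 : 0 < t := hT'0.trans ht'
    have ht1 : 1 ≤ t := hT'1.trans ht'.le
    have hwt := hwpos t
    have hL : (cg ^ (r+1) * 2 ^ (-(q/2))) * (k ^ (r+2) * t ^ (-q)) ≤ N t := by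
      rw [show N t = M (-t) * M t ^ r / (M t ⊔ k⁻¹) ^ (r + 2) from rfl]
      rw [hsmall t ht, Real.inv_rpow hk0.le,
        div_eq_mul_inv (M (-t) * M t ^ r) ((k ^ (r+2))⁻¹), inv_inv]
      have h1 : cg * w t ≤ M (-t) := by rw [← hwneg t]; exact hMl (-t)
      have h2 : (cg * w t) ^ r ≤ M t ^ r :=
        Real.rpow_le_rpow (by positivity) (hMl t) hr0.le
      have h3 : (cg * w t) * (cg * w t) ^ r ≤ M (-t) * M t ^ r :=
        mul_le_mul h1 h2 (Real.rpow_nonneg (by positivity) _) (hMpos (-t)).le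
      have hcgr : (cg * w t) * (cg * w t) ^ r = cg ^ (r+1) * w t ^ (r+1) := by
        rw [Real.mul_rpow hcg.le hwt.le]
        rw [show cg * w t * (cg ^ r * w t ^ r) = (cg * cg ^ r) * (w t * w t ^ r) by ring]
        rw [show cg * cg ^ r = cg ^ (r+1) by
          rw [Real.rpow_add hcg, Real.rpow_one]; ring]
        rw [show w t * w t ^ r = w t ^ (r+1) by
          rw [Real.rpow_add hwt, Real.rpow_one]; ring]
      have hwlb : 2 ^ (-(q/2)) * t ^ (-q) ≤ w t ^ (r+1) := by
        have e1 : w t ^ (r+1) = (1 + t ^ 2) ^ ((-γ/2)*(r+1)) := by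
          rw [show w t = (1 + t ^ 2) ^ (-γ/2) from rfl]
          exact (Real.rpow_mul (h1t t).le _ _).symm
        have e2 : (2 * t ^ 2) ^ ((-γ/2)*(r+1)) ≤ (1 + t ^ 2) ^ ((-γ/2)*(r+1)) := by
          have h5 : (1:ℝ) ≤ t ^ 2 := by
            calc (1:ℝ) = 1 * 1 := by ring
              _ ≤ t * t := mul_le_mul ht1 ht1 zero_le_one (by linarith)
              _ = t ^ 2 := (sq t).symm
          apply Real.rpow_le_rpow_of_nonpos (h1t t) (by linarith) ?_
          have h6 : (0:ℝ) ≤ (γ/2)*(r+1) := by positivity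
          linarith
        rw [Real.mul_rpow (by norm_num) (sq_nonneg t), pow_two_rpow ht0.le] at e2
        rw [e1]
        rw [show (-γ/2)*(r+1) = -(q/2) by rw [hq_def]; ring] at e2 ⊢
        rwa [show (2:ℝ)*(-(q/2)) = -q by ring] at e2
      calc (cg ^ (r+1) * 2 ^ (-(q/2))) * (k ^ (r+2) * t ^ (-q))
          = (cg ^ (r+1) * (2 ^ (-(q/2)) * t ^ (-q))) * k ^ (r+2) := by ring
        _ ≤ (cg ^ (r+1) * w t ^ (r+1)) * k ^ (r+2) := by
            apply mul_le_mul_of_nonneg_right ?_ (Real.rpow_nonneg hk0.le _)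
            exact mul_le_mul_of_nonneg_left hwlb (Real.rpow_nonneg hcg.le _)
        _ = ((cg * w t) * (cg * w t) ^ r) * k ^ (r+2) := by rw [hcgr]
        _ ≤ (M (-t) * M t ^ r) * k ^ (r+2) := by
            exact mul_le_mul_of_nonneg_right h3 (Real.rpow_nonneg hk0.le _)
    have hLnn : (0:ℝ) ≤ (cg ^ (r+1) * 2 ^ (-(q/2))) * (k ^ (r+2) * t ^ (-q)) := by
      have h1 : (0:ℝ) ≤ cg ^ (r+1) := Real.rpow_nonneg hcg.le _
      have h2 : (0:ℝ) ≤ (2:ℝ) ^ (-(q/2)) := Real.rpow_nonneg (by norm_num) _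
      have h3 : (0:ℝ) ≤ k ^ (r+2) := Real.rpow_nonneg hk0.le _
      have h4 : (0:ℝ) ≤ t ^ (-q) := Real.rpow_nonneg ht0.le _
      positivity
    have hsq := pow_le_pow_left₀ hLnn hL 2
    calc (b * k ^ (2*(r+2))) * t ^ (-(2*q))
        = ((cg ^ (r+1) * 2 ^ (-(q/2))) * (k ^ (r+2) * t ^ (-q))) ^ 2 := by
          rw [mul_pow, mul_pow, mul_pow, sq_rpow two_pos, sq_rpow hk0, sq_rpow ht0,
            show 2*(-(q/2)) = -q by ring, show 2*(-q) = -(2*q) by ring, hb_def]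
          ring
      _ ≤ N t ^ 2 := hsq
  have hlow_tail_int : IntegrableOn (fun t : ℝ => (b * k ^ (2*(r+2))) * t ^ (-(2*q)))
      (Ioi T') := (integrableOn_Ioi_rpow_of_lt h2q hT'0).const_mul _
  have hlow_int : (b * k ^ (2*(r+2))) * (T' ^ (1 - 2*q) / (2*q - 1)) ≤ ∫ t, N t ^ 2 := by
    have h0 : (∫ t in Ioi T', (b * k ^ (2*(r+2))) * t ^ (-(2*q)))
        ≤ ∫ t in Ioi T', N t ^ 2 :=
      setIntegral_mono_on hlow_tail_int hSint.integrableOn measurableSet_Ioi hlow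
    have h1 : (∫ t in Ioi T', N t ^ 2) ≤ ∫ t, N t ^ 2 :=
      setIntegral_le_integral hSint (Filter.Eventually.of_forall (fun t => by positivity))
    have hval : (∫ t in Ioi T', (b * k ^ (2*(r+2))) * t ^ (-(2*q)))
        = (b * k ^ (2*(r+2))) * (T' ^ (1 - 2*q) / (2*q - 1)) := by
      rw [integral_const_mul, integral_Ioi_rpow_of_lt h2q hT'0]
      congr 1
      rw [show -(2*q)+1 = 1-2*q by ring]
      rw [div_eq_div_iff (by linarith) (by linarith : (2*q-1 : ℝ) ≠ 0)]
      ring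
    exact le_trans (le_of_eq hval.symm) (h0.trans h1)
  have hT'v : k ^ (2*(r+2)) * T' ^ (1 - 2*q)
      = Cg' ^ ((1/γ) * (1 - 2*q)) * k ^ (2 + 1/γ) := by
    have e1 : T' ^ (1 - 2*q) = Cg' ^ ((1/γ) * (1 - 2*q)) * k ^ ((1/γ) * (1 - 2*q)) := by
      rw [hT'_def, ← Real.rpow_mul hCk0.le, Real.mul_rpow hCg'0.le hk0.le]
    rw [e1, show k ^ (2*(r+2)) * (Cg' ^ ((1/γ) * (1 - 2*q)) * k ^ ((1/γ) * (1 - 2*q)))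
      = Cg' ^ ((1/γ) * (1 - 2*q)) * (k ^ (2*(r+2)) * k ^ ((1/γ) * (1 - 2*q))) by ring,
      ← Real.rpow_add hk0]
    congr 2
    rw [hq_def]
    field_simp
    try ring
  constructor
  · -- lower bound
    rw [hRS]
    refine le_trans (le_of_eq ?_) hlow_int
    rw [show (b * k ^ (2*(r+2))) * (T' ^ (1 - 2*q) / (2*q - 1))
      = b * (k ^ (2*(r+2)) * T' ^ (1 - 2*q)) / (2*q - 1) by ring, hT'v]
    ring
  · -- upper bound
    rw [hRS, hsplit]
    calc (∫ t in Icc (-T) T, N t ^ 2) + ∫ t in (Icc (-T) T)ᶜ, N t ^ 2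
        ≤ 2 ^ (γ+1) * A * k ^ (2 + 1/γ) + 2 * (B / (2*q - 1)) * k ^ (2 + 1/γ) :=
          add_le_add hIcc hcompl
      _ = (2 ^ (γ+1) * A + 2 * (B / (2*q - 1))) * k ^ (2 + 1/γ) := by ring


end MultDeconv
end
end

section
/- Let c ∈ ℝ, s, L > 0, let g ∈ L¹((0,∞), x^{c−1}) satisfy [G1] with parameter γ > 0, and let f ∈ L¹((0,∞), x^{c−1}) ∩ L²((0,∞), x^{2c−1}) satisfy ∫_ℝ (1+t²)^s |M_c[f](t)|² dt ≤ L. Then there is a constant C(g, L, s) > 0, depending only on g, L and s, such that for all k ≥ 1, ∫_{G_k} |M_c[f](t)|² dt ≤ C(g, L, s) k^{−2s/γ}, where G_k = {t ∈ ℝ : k^{−1} > |M_c[g](t)|}. -/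
open MeasureTheory Set Filter Finset
open scoped Real NNReal ENNReal Topology

noncomputable section

namespace MultDeconv

lemma aesm_mellinT (c : ℝ) (f : ℝ → ℂ)
    (hf : AEStronglyMeasurable f (volume.restrict (Ioi 0))) :
    AEStronglyMeasurable (fun t => mellinT c f t) volume := by
  have h1 : AEStronglyMeasurable
      (fun p : ℝ × ℝ => ((p.2 : ℂ)) ^ ((c : ℂ) - 1 + (p.1 : ℂ) * Complex.I) * f p.2)
      (volume.prod (volume.restrict (Ioi 0))) := by
    refine AEStronglyMeasurable.mul ?_ hf.comp_snd
    have heq : (volume : Measure ℝ).prod (volume.restrict (Ioi (0:ℝ)))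
        = ((volume : Measure ℝ).prod volume).restrict (Set.univ ×ˢ Set.Ioi 0) := by
      rw [← Measure.prod_restrict, Measure.restrict_univ]
    rw [heq]
    refine ContinuousOn.aestronglyMeasurable ?_ (MeasurableSet.univ.prod measurableSet_Ioi)
    intro p hp
    apply ContinuousAt.continuousWithinAt
    have hx : (0:ℝ) < p.2 := hp.2
    have hca : ContinuousAt (fun q : ℂ × ℂ => q.1 ^ q.2)
        ((p.2 : ℂ), (c : ℂ) - 1 + (p.1 : ℂ) * Complex.I) := by
      apply continuousAt_cpow
      rw [Complex.mem_slitPlane_iff]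
      left; simpa using hx
    have hcm : ContinuousAt (fun p : ℝ × ℝ =>
        (((p.2 : ℂ)), (c : ℂ) - 1 + (p.1 : ℂ) * Complex.I)) p := by fun_prop
    exact ContinuousAt.comp (g := fun q : ℂ × ℂ => q.1 ^ q.2)
      (f := fun p : ℝ × ℝ => (((p.2 : ℂ)), (c : ℂ) - 1 + (p.1 : ℂ) * Complex.I))
      (x := p) hca hcm
  exact h1.integral_prod_right'

/-- Under [G1], for `f` in the Mellin--Sobolev ball of radius `L` the
bias term satisfies `∫_{G_k}|M_c[f]|² ≤ C(g,L,s) k^{−2s/γ}` for all `k ≥ 1`. -/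
theorem sobolev_bias_bound (c s L : ℝ) (hs : 0 < s) (hL : 0 < L)
    (g : ℝ → ℝ) (cg Cg γ : ℝ)
    (hg : IsDensity g) (hg1 : MemL1w c (toC g))
    (hG1 : AssumptionG1 c g cg Cg γ) :
    ∃ C : ℝ, 0 < C ∧ ∀ f : ℝ → ℂ, MemL1w c f → MemL2w c f →
      Integrable (fun t : ℝ => (1 + t ^ 2) ^ s * ‖mellinT c f t‖ ^ 2) →
      (∫ t : ℝ, (1 + t ^ 2) ^ s * ‖mellinT c f t‖ ^ 2) ≤ L →
      ∀ k : ℝ, 1 ≤ k →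
        (∫ t in Gset c g 0 k, ‖mellinT c f t‖ ^ 2) ≤ C * k ^ (-(2 * s / γ)) := by
  obtain ⟨hcg, hCg, hγ, hbd⟩ := hG1
  refine ⟨cg ^ (-(2 * s / γ)) * L, by positivity, ?_⟩
  intro f hf1 hf2 hInt hIntL k hk
  have hk0 : (0:ℝ) < k := lt_of_lt_of_le one_pos hk
  set Mf : ℝ → ℝ := fun t => ‖mellinT c f t‖ ^ 2 with hMf
  set B : ℝ := (cg * k) ^ (-(2 * s / γ)) with hB
  have hck0 : (0:ℝ) < cg * k := by positivity
  have hB0 : 0 ≤ B := Real.rpow_nonneg hck0.le _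
  have hMf0 : ∀ t, 0 ≤ Mf t := fun t => sq_nonneg _
  -- pointwise bound on `G_k`
  have hpt : ∀ t ∈ Gset c g 0 k, Mf t ≤ B * ((1 + t ^ 2) ^ s * Mf t) := by
    intro t ht
    have hmem : ‖mellinT c (toC g) t‖ < k⁻¹ * (1 + |t|) ^ (0:ℝ) := ht
    rw [Real.rpow_zero, mul_one] at hmem
    have h1t : (0:ℝ) < 1 + t ^ 2 := by positivity
    have hA : (0:ℝ) < (1 + t ^ 2) ^ (γ / 2) := Real.rpow_pos_of_pos h1t _
    have hlt : cg * (1 + t ^ 2) ^ (-γ / 2) < k⁻¹ := lt_of_le_of_lt (hbd t).1 hmem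
    have h2 : cg * k < (1 + t ^ 2) ^ (γ / 2) := by
      have hneg : (1 + t ^ 2) ^ (-γ / 2) = ((1 + t ^ 2) ^ (γ / 2))⁻¹ := by
        rw [neg_div, Real.rpow_neg h1t.le]
      rw [hneg, ← div_eq_mul_inv, ← one_div] at hlt
      have := (div_lt_div_iff₀ hA hk0).1 hlt
      linarith
    have h3 : (cg * k) ^ (2 * s / γ) ≤ (1 + t ^ 2) ^ s := by
      have := Real.rpow_le_rpow hck0.le h2.le (by positivity : (0:ℝ) ≤ 2 * s / γ)
      rwa [← Real.rpow_mul h1t.le,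
        show γ / 2 * (2 * s / γ) = s by field_simp] at this
    have h4 : (1:ℝ) ≤ B * (1 + t ^ 2) ^ s := by
      have : B * (cg * k) ^ (2 * s / γ) = 1 := by
        rw [hB, ← Real.rpow_add hck0]; simp
      calc (1:ℝ) = B * (cg * k) ^ (2 * s / γ) := this.symm
        _ ≤ B * (1 + t ^ 2) ^ s := mul_le_mul_of_nonneg_left h3 hB0
    calc Mf t = 1 * Mf t := (one_mul _).symm
      _ ≤ (B * (1 + t ^ 2) ^ s) * Mf t := mul_le_mul_of_nonneg_right h4 (hMf0 t)
      _ = B * ((1 + t ^ 2) ^ s * Mf t) := by ring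
  -- measurability facts
  have haesm : AEStronglyMeasurable (fun t => mellinT c f t) volume := aesm_mellinT c f hf2.1
  have hMfm : AEStronglyMeasurable Mf volume :=
    ((haesm.aemeasurable.norm.pow_const 2).aestronglyMeasurable)
  have haesmg : AEStronglyMeasurable (fun t => mellinT c (toC g) t) volume :=
    aesm_mellinT c (toC g)
      ((Complex.measurable_ofReal.comp hg.1).aestronglyMeasurable)
  have hGeq : Gset c g 0 k = {t | ‖mellinT c (toC g) t‖ < k⁻¹} := by
    ext t; simp [Gset, Real.rpow_zero]
  have Gnull : NullMeasurableSet (Gset c g 0 k) volume := by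
    rw [hGeq]
    have habs : AEMeasurable (fun t => ‖mellinT c (toC g) t‖) volume := by
      exact haesmg.aemeasurable.norm
    exact nullMeasurableSet_lt habs aemeasurable_const
  have hIntB : Integrable (fun t : ℝ => B * ((1 + t ^ 2) ^ s * Mf t)) := hInt.const_mul B
  have hIntOnRHS : IntegrableOn (fun t : ℝ => B * ((1 + t ^ 2) ^ s * Mf t))
      (Gset c g 0 k) := hIntB.integrableOn
  have hIntOnLHS : IntegrableOn Mf (Gset c g 0 k) := by
    refine Integrable.mono' hIntOnRHS hMfm.restrict ?_
    filter_upwards [ae_restrict_mem₀ Gnull] with t ht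
    rw [Real.norm_eq_abs, abs_of_nonneg (hMf0 t)]
    exact hpt t ht
  calc (∫ t in Gset c g 0 k, Mf t)
      ≤ ∫ t in Gset c g 0 k, B * ((1 + t ^ 2) ^ s * Mf t) := by
        refine setIntegral_mono_ae_restrict hIntOnLHS hIntOnRHS ?_
        filter_upwards [ae_restrict_mem₀ Gnull] with t ht
        exact hpt t ht
    _ ≤ ∫ t, B * ((1 + t ^ 2) ^ s * Mf t) := by
        refine setIntegral_le_integral hIntB ?_
        filter_upwards with t
        have h1t : (0:ℝ) < 1 + t ^ 2 := by positivity
        have := hMf0 t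
        have := Real.rpow_nonneg h1t.le s
        positivity
    _ = B * ∫ t, (1 + t ^ 2) ^ s * Mf t := integral_const_mul B _
    _ ≤ B * L := mul_le_mul_of_nonneg_left hIntL hB0
    _ = cg ^ (-(2 * s / γ)) * L * k ^ (-(2 * s / γ)) := by
        rw [hB, Real.mul_rpow hcg.le hk0.le]; ring

end MultDeconv
end
end

section
/- (Lemma, deviation of the empirical penalty) Under the assumptions of Theorem 3 (in particular σ_c := E(Y₁^{2(c−1)}) < ∞ and E(Y₁^{4(c−1)}) < ∞), it holds that E[ sup_{k∈𝒦_n} (V(k) − V̂(k))₊ ] ≤ C/n, where V(k) := σ_c‖R_k‖²_{L²(ℝ)}/n, V̂(k) := 2σ̂_c‖R_k‖²_{L²(ℝ)}/n with σ̂_c := n^{−1}Σ_{j=1}^n Y_j^{2(c−1)}, 𝒦_n := {k ∈ ℕ : ‖R_k‖²_{L²(ℝ)} ≤ n}, and C > 0 depends only on σ_c and E(Y₁^{4(c−1)}); in fact E[(σ_c − 2σ̂_c)₊] ≤ 4·Var(σ̂_c)/σ_c. -/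
open MeasureTheory Set Filter Finset
open scoped Real NNReal ENNReal Topology

noncomputable section

namespace MultDeconv

section AuxLemmas

open ProbabilityTheory

/-- `fun x => x ^ a` (real power) is measurable. -/
lemma aux_measurable_rpow_const (a : ℝ) : Measurable fun x : ℝ => x ^ a := by
  have hrw : (fun x : ℝ => x ^ a) = fun x : ℝ =>
      if x = 0 then (if a = 0 then 1 else 0)
      else Real.exp (Real.log x * a) * (if x < 0 then Real.cos (a * π) else 1) := by
    funext x
    rcases lt_trichotomy x 0 with h | h | h
    · rw [Real.rpow_def_of_neg h]
      simp [h.ne, h, mul_comm]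
    · subst h
      rcases eq_or_ne a 0 with ha | ha
      · simp [ha]
      · simp [ha, Real.zero_rpow ha]
    · rw [Real.rpow_def_of_pos h]
      simp [h.ne', not_lt.mpr h.le]
  rw [hrw]
  exact Measurable.ite (measurableSet_eq (a := (0:ℝ))) measurable_const
    ((Real.measurable_exp.comp (Real.measurable_log.mul_const a)).mul
      (Measurable.ite measurableSet_Iio measurable_const measurable_const))

variable {α : Type*} [MeasurableSpace α] (μ : Measure α) [IsProbabilityMeasure μ]

lemma aux_pi_eval_preimage {n : ℕ} (i : Fin n) {s : Set α} (hs : MeasurableSet s) :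
    Measure.pi (fun _ : Fin n => μ) ((fun y : Fin n → α => y i) ⁻¹' s) = μ s := by
  classical
  have h1 : (fun y : Fin n → α => y i) ⁻¹' s
      = Set.pi Set.univ (Function.update (fun _ => (Set.univ : Set α)) i s) :=
    Set.eval_preimage
  rw [h1, Measure.pi_pi]
  calc ∏ l, μ (Function.update (fun _ => (Set.univ : Set α)) i s l)
      = ∏ l, (if l = i then μ s else 1) := by
        refine Finset.prod_congr rfl fun l _ => ?_
        rcases eq_or_ne l i with h | h <;> simp [Function.update_apply, h]
    _ = μ s := by rw [Finset.prod_ite_eq' Finset.univ i (fun _ => μ s)]; simp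

lemma aux_measurePreserving_eval {n : ℕ} (i : Fin n) :
    MeasurePreserving (fun y : Fin n → α => y i) (Measure.pi fun _ => μ) μ := by
  refine ⟨measurable_pi_apply i, ?_⟩
  refine Measure.ext fun s hs => ?_
  rw [Measure.map_apply (measurable_pi_apply i) hs, aux_pi_eval_preimage μ i hs]

lemma aux_indepFun_eval {n : ℕ} {i j : Fin n} (hij : i ≠ j) :
    IndepFun (fun y : Fin n → α => y i) (fun y : Fin n → α => y j)
      (Measure.pi fun _ => μ) := by
  classical
  rw [ProbabilityTheory.indepFun_iff_measure_inter_preimage_eq_mul]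
  intro s t hs ht
  rw [aux_pi_eval_preimage μ i hs, aux_pi_eval_preimage μ j ht]
  have h1 : (fun y : Fin n → α => y i) ⁻¹' s
      = Set.pi Set.univ (Function.update (fun _ => (Set.univ : Set α)) i s) :=
    Set.eval_preimage
  have h2 : (fun y : Fin n → α => y j) ⁻¹' t
      = Set.pi Set.univ (Function.update (fun _ => (Set.univ : Set α)) j t) :=
    Set.eval_preimage
  rw [h1, h2, ← Set.pi_inter_distrib, Measure.pi_pi]
  calc (∏ l, μ (Function.update (fun _ => (Set.univ : Set α)) i s l ∩
          Function.update (fun _ => (Set.univ : Set α)) j t l))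
      = ∏ l, ((if l = i then μ s else 1) * (if l = j then μ t else 1)) := by
        refine Finset.prod_congr rfl fun l _ => ?_
        rcases eq_or_ne l i with h | h
        · subst h
          simp [Function.update_apply, hij]
        · rcases eq_or_ne l j with h' | h'
          · subst h'
            simp [Function.update_apply, h]
          · simp [Function.update_apply, h, h']
    _ = μ s * μ t := by
        rw [Finset.prod_mul_distrib, Finset.prod_ite_eq' Finset.univ i (fun _ => μ s),
          Finset.prod_ite_eq' Finset.univ j (fun _ => μ t)]
        simp

/-- rescaling of a Lebesgue integral over `(0,∞)` -/
lemma aux_lintegral_Ioi_comp_div {x : ℝ} (hx : 0 < x) (h : ℝ → ℝ≥0∞) (hm : Measurable h) :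
    ∫⁻ y in Ioi (0:ℝ), h (y / x) = ENNReal.ofReal x * ∫⁻ y in Ioi (0:ℝ), h y := by
  have hx' : x ≠ 0 := hx.ne'
  have e_meas : Measurable fun y : ℝ => y * x⁻¹ := measurable_id.mul_const _
  have hpre : (fun y : ℝ => y * x⁻¹) ⁻¹' Set.Ioi 0 = Set.Ioi (0:ℝ) := by
    ext y
    simp only [Set.mem_preimage, Set.mem_Ioi]
    constructor
    · intro hy
      have h2 := mul_pos hy hx
      rwa [mul_assoc, inv_mul_cancel₀ hx', mul_one] at h2
    · intro hy
      exact mul_pos hy (inv_pos.mpr hx)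
  have key : ∫⁻ z in Ioi (0:ℝ), h z ∂(Measure.map (fun y : ℝ => y * x⁻¹) volume)
      = ∫⁻ y in (fun y : ℝ => y * x⁻¹) ⁻¹' Set.Ioi 0, h (y * x⁻¹) := by
    rw [Measure.restrict_map e_meas measurableSet_Ioi, lintegral_map hm e_meas]
  rw [Real.map_volume_mul_right (inv_ne_zero hx'), inv_inv, abs_of_pos hx,
    Measure.restrict_smul, lintegral_smul_measure, hpre] at key
  calc ∫⁻ y in Ioi (0:ℝ), h (y / x) = ∫⁻ y in Ioi (0:ℝ), h (y * x⁻¹) := by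
        simp_rw [div_eq_mul_inv]
    _ = ENNReal.ofReal x * ∫⁻ y in Ioi (0:ℝ), h y := key.symm

lemma aux_isDensity_integrable {f : ℝ → ℝ} (hf : IsDensity f) : IntegrableOn f (Ioi 0) := by
  by_contra h
  have := hf.2.2.2
  rw [MeasureTheory.integral_undef h] at this
  exact one_ne_zero this.symm

lemma aux_lintegral_isDensity {f : ℝ → ℝ} (hf : IsDensity f) :
    ∫⁻ x in Ioi (0:ℝ), ENNReal.ofReal (f x) = 1 := by
  rw [← ofReal_integral_eq_lintegral_ofReal (aux_isDensity_integrable hf)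
    (ae_of_all _ hf.2.1), hf.2.2.2, ENNReal.ofReal_one]

/-- the law of `Y` is a probability measure -/
lemma aux_isProbabilityMeasure_lawY {f g : ℝ → ℝ} (hf : IsDensity f) (hg : IsDensity g) :
    IsProbabilityMeasure (lawY f g) := by
  obtain ⟨hfm, hf0, -, -⟩ := id hf
  obtain ⟨hgm, hg0, -, -⟩ := id hg
  have hFm : Measurable (Function.uncurry fun y x : ℝ =>
      ENNReal.ofReal (f (y / x) * g x / x)) := by
    apply Measurable.ennreal_ofReal
    exact ((hfm.comp (measurable_fst.div measurable_snd)).mul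
      (hgm.comp measurable_snd)).div measurable_snd
  have hgx : ∀ x ∈ Ioi (0:ℝ),
      (∫⁻ y in Ioi (0:ℝ), ENNReal.ofReal (f (y / x) * g x / x)) = ENNReal.ofReal (g x) := by
    intro x hx
    have hx0 : (0:ℝ) < x := hx
    have step1 : ∀ y : ℝ, ENNReal.ofReal (f (y / x) * g x / x)
        = ENNReal.ofReal (f (y / x)) * ENNReal.ofReal (g x / x) := fun y => by
      rw [mul_div_assoc, ENNReal.ofReal_mul (hf0 _)]
    simp_rw [step1]
    have hmy : Measurable fun y : ℝ => ENNReal.ofReal (f (y / x)) :=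
      (ENNReal.measurable_ofReal.comp hfm).comp (measurable_id.div_const x)
    rw [lintegral_mul_const _ hmy,
      aux_lintegral_Ioi_comp_div hx0 (fun z => ENNReal.ofReal (f z))
        (ENNReal.measurable_ofReal.comp hfm),
      aux_lintegral_isDensity hf, mul_one, ← ENNReal.ofReal_mul hx0.le]
    congr 1
    field_simp
  have hswap : ∫⁻ y in Ioi (0:ℝ), ∫⁻ x in Ioi (0:ℝ),
      ENNReal.ofReal (f (y / x) * g x / x) = 1 := by
    rw [lintegral_lintegral_swap hFm.aemeasurable]
    rw [setLIntegral_congr_fun measurableSet_Ioi hgx]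
    exact aux_lintegral_isDensity hg
  have hfin : ∀ᵐ y ∂(volume.restrict (Ioi (0:ℝ))),
      (∫⁻ x in Ioi (0:ℝ), ENNReal.ofReal (f (y / x) * g x / x)) < ⊤ := by
    refine ae_lt_top ?_ ?_
    · exact hFm.lintegral_prod_right'
    · rw [hswap]; exact ENNReal.one_ne_top
  have hconv : ∀ᵐ y ∂(volume.restrict (Ioi (0:ℝ))),
      ENNReal.ofReal (mConvR f g y)
        = ∫⁻ x in Ioi (0:ℝ), ENNReal.ofReal (f (y / x) * g x / x) := by
    filter_upwards [hfin] with y hy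
    have hmy : AEStronglyMeasurable (fun x : ℝ => f (y / x) * g x / x)
        (volume.restrict (Ioi 0)) :=
      (((hfm.comp (measurable_const.div measurable_id)).mul hgm).div
        measurable_id).aestronglyMeasurable
    have hnn : 0 ≤ᵐ[volume.restrict (Ioi (0:ℝ))] fun x : ℝ => f (y / x) * g x / x := by
      filter_upwards [ae_restrict_mem measurableSet_Ioi] with x hx
      exact div_nonneg (mul_nonneg (hf0 _) (hg0 _)) (le_of_lt hx)
    rw [mConvR, integral_eq_lintegral_of_nonneg_ae hnn hmy, ENNReal.ofReal_toReal hy.ne]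
  constructor
  rw [lawY, withDensity_apply _ MeasurableSet.univ, Measure.restrict_univ,
    lintegral_congr_ae hconv]
  exact hswap

lemma aux_lawY_compl_null (f g : ℝ → ℝ) : (lawY f g) ((Ioi (0:ℝ))ᶜ) = 0 := by
  have h0 : (volume.restrict (Ioi (0:ℝ))) ((Ioi (0:ℝ))ᶜ) = 0 := by
    rw [Measure.restrict_apply (measurableSet_Ioi.compl), Set.compl_Ioi]
    have hempty : Set.Iic (0:ℝ) ∩ Set.Ioi 0 = ∅ := by
      ext z
      simp only [Set.mem_inter_iff, Set.mem_Iic, Set.mem_Ioi, Set.mem_empty_iff_false,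
        iff_false, not_and, not_lt]
      exact fun h => h
    rw [hempty, measure_empty]
  exact (withDensity_absolutelyContinuous _ _) h0

lemma aux_lawY_ae_pos (f g : ℝ → ℝ) : ∀ᵐ y ∂(lawY f g), 0 < y := by
  rw [ae_iff]
  have hset : {y : ℝ | ¬ (0:ℝ) < y} = (Ioi (0:ℝ))ᶜ := by
    ext y; simp [not_lt]
  rw [hset]
  exact aux_lawY_compl_null f g

/-- elementary inequality : `(s - 2t)₊ ≤ 4 (t - s)² / s` for `s > 0` -/
lemma aux_max_sub_le (s t : ℝ) (hs : 0 < s) : max (s - 2 * t) 0 ≤ 4 * (t - s) ^ 2 / s := by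
  refine max_le ?_ (by positivity)
  rw [le_div_iff₀ hs]
  nlinarith [sq_nonneg (2 * t - s), sq_nonneg (4 * t - 3 * s)]

end AuxLemmas

/-- deviation of the empirical penalty. -/
theorem penalty_deviation (c : ℝ) (f g : ℝ → ℝ) (r : ℝ)
    (hf : IsDensity f) (hg : IsDensity g)
    (hσ : Integrable (fun y => y ^ (2 * (c - 1))) (lawY f g))
    (hσ4 : Integrable (fun y => y ^ (4 * (c - 1))) (lawY f g)) :
    ∃ C : ℝ, 0 < C ∧ ∀ n : ℕ, 0 < n →
      ((∫ y, (⨆ k ∈ Kn c g r n,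
          max (Vfun c f g r n k - Vhat c g r y k) 0) ∂(sampleLaw n f g)) ≤ C / n) ∧
      (∫ y, max (sigmaC c f g - 2 * sigmaHat c y) 0 ∂(sampleLaw n f g)) ≤
        4 * (∫ y, (sigmaHat c y - ∫ y', sigmaHat c y' ∂(sampleLaw n f g)) ^ 2
              ∂(sampleLaw n f g)) / sigmaC c f g := by
  classical
  have hprob : IsProbabilityMeasure (lawY f g) := aux_isProbabilityMeasure_lawY hf hg
  have hpos : ∀ᵐ y ∂(lawY f g), 0 < y := aux_lawY_ae_pos f g
  set μ : Measure ℝ := lawY f g with hμdef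
  have hφm : Measurable (fun t : ℝ => t ^ (2 * (c - 1))) :=
    aux_measurable_rpow_const (2 * (c - 1))
  have hsq_ae : ∀ᵐ y ∂μ, y ^ (4 * (c - 1)) = (y ^ (2 * (c - 1))) ^ 2 := by
    filter_upwards [hpos] with y hy
    rw [← Real.rpow_natCast (y ^ (2 * (c - 1))) 2, ← Real.rpow_mul hy.le]
    congr 1
    push_cast
    ring
  have hφsq : Integrable (fun t : ℝ => (t ^ (2 * (c - 1))) ^ 2) μ := hσ4.congr hsq_ae
  have hφ2 : MemLp (fun t : ℝ => t ^ (2 * (c - 1))) 2 μ :=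
    (memLp_two_iff_integrable_sq hφm.aestronglyMeasurable).mpr hφsq
  have hm4eq : ∫ t, (t ^ (2 * (c - 1))) ^ 2 ∂μ = ∫ y, y ^ (4 * (c - 1)) ∂μ :=
    (integral_congr_ae hsq_ae).symm
  have hm4nn : 0 ≤ ∫ y, y ^ (4 * (c - 1)) ∂μ := by
    refine integral_nonneg_of_ae ?_
    filter_upwards [hpos] with y hy
    exact Real.rpow_nonneg hy.le _
  have hσeq : sigmaC c f g = ∫ t, t ^ (2 * (c - 1)) ∂μ := rfl
  have hσpos : 0 < sigmaC c f g := by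
    rw [hσeq]
    refine (integral_pos_iff_support_of_nonneg_ae ?_ hσ).mpr ?_
    · filter_upwards [hpos] with y hy
      exact Real.rpow_nonneg hy.le _
    · have hsup : Ioi (0:ℝ) ⊆ Function.support (fun t : ℝ => t ^ (2 * (c - 1))) := by
        intro y hy
        exact (Real.rpow_pos_of_pos hy _).ne'
      have hmeas : MeasurableSet (Function.support (fun t : ℝ => t ^ (2 * (c - 1)))) :=
        hφm (measurableSet_singleton 0).compl
      have hcompl : μ ((Function.support (fun t : ℝ => t ^ (2 * (c - 1))))ᶜ) = 0 :=
        measure_mono_null (Set.compl_subset_compl.mpr hsup) (aux_lawY_compl_null f g)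
      have h1 : μ (Function.support (fun t : ℝ => t ^ (2 * (c - 1)))) = 1 := by
        have h2 := measure_add_measure_compl (μ := μ) hmeas
        rw [hcompl, add_zero, measure_univ] at h2
        exact h2
      rw [h1]
      exact zero_lt_one
  have hCnn : 0 ≤ 4 * (∫ y, y ^ (4 * (c - 1)) ∂μ) / sigmaC c f g := by positivity
  refine ⟨4 * (∫ y, y ^ (4 * (c - 1)) ∂μ) / sigmaC c f g + 1, by linarith, fun n hn => ?_⟩
  have hnR : (0:ℝ) < (n:ℝ) := Nat.cast_pos.mpr hn
  have hπpi : sampleLaw n f g = Measure.pi (fun _ : Fin n => μ) := rfl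
  haveI hπprob : IsProbabilityMeasure (sampleLaw n f g) := by
    rw [hπpi]; infer_instance
  have hmp : ∀ j : Fin n,
      MeasurePreserving (fun y : Fin n → ℝ => y j) (sampleLaw n f g) μ := by
    intro j
    rw [hπpi]
    exact aux_measurePreserving_eval μ j
  set X : Fin n → (Fin n → ℝ) → ℝ := fun j y => (y j) ^ (2 * (c - 1)) with hXdef
  have hXmem : ∀ j, MemLp (X j) 2 (sampleLaw n f g) := fun j =>
    hφ2.comp_measurePreserving (hmp j)
  have hXint : ∀ j, Integrable (X j) (sampleLaw n f g) := fun j =>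
    (hXmem j).integrable one_le_two
  have hXE : ∀ j, ∫ y, X j y ∂(sampleLaw n f g) = ∫ t, t ^ (2 * (c - 1)) ∂μ := by
    intro j
    rw [← (hmp j).map_eq, integral_map (measurable_pi_apply j).aemeasurable
      hφm.aestronglyMeasurable]
  have hsh : (fun y : Fin n → ℝ => sigmaHat c y)
      = fun y : Fin n → ℝ => (n:ℝ)⁻¹ * ∑ j, X j y := rfl
  have hfun : (fun y : Fin n → ℝ => sigmaHat c y)
      = fun y : Fin n → ℝ => (n:ℝ)⁻¹ * (∑ j, X j) y := by
    funext y
    simp only [sigmaHat, hXdef, Finset.sum_apply]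
  have hShMem : MemLp (fun y : Fin n → ℝ => sigmaHat c y) 2 (sampleLaw n f g) := by
    rw [hfun]
    exact (memLp_finset_sum' Finset.univ (fun j _ => hXmem j)).const_mul _
  have hEsh : ∫ y, sigmaHat c y ∂(sampleLaw n f g) = sigmaC c f g := by
    rw [hsh, integral_const_mul, integral_finset_sum Finset.univ (fun j _ => hXint j),
      Finset.sum_congr rfl (fun j _ => hXE j), Finset.sum_const, Finset.card_univ,
      Fintype.card_fin, nsmul_eq_mul, hσeq]
    field_simp
  have hvarX : ∀ j, ProbabilityTheory.variance (X j) (sampleLaw n f g)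
      = ProbabilityTheory.variance (fun t : ℝ => t ^ (2 * (c - 1))) μ := by
    intro j
    rw [ProbabilityTheory.variance_eq_sub (hXmem j), ProbabilityTheory.variance_eq_sub hφ2,
      hXE j]
    congr 1
    simp only [Pi.pow_apply]
    rw [← (hmp j).map_eq, integral_map (measurable_pi_apply j).aemeasurable
      (hφm.pow_const 2).aestronglyMeasurable]
  have hpair : Set.Pairwise ↑(Finset.univ : Finset (Fin n))
      (fun i j => ProbabilityTheory.IndepFun (X i) (X j) (sampleLaw n f g)) := by
    intro i _ j hj hij
    have h := (aux_indepFun_eval μ (n := n) hij).comp hφm hφm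
    rw [hπpi]
    exact h
  have hvs := ProbabilityTheory.IndepFun.variance_sum (μ := sampleLaw n f g) (X := X)
    (s := Finset.univ) (fun j _ => hXmem j) hpair
  have hvarSh : ProbabilityTheory.variance (fun y : Fin n → ℝ => sigmaHat c y)
        (sampleLaw n f g)
      = ProbabilityTheory.variance (fun t : ℝ => t ^ (2 * (c - 1))) μ / n := by
    rw [hfun, ProbabilityTheory.variance_const_mul, hvs,
      Finset.sum_congr rfl (fun j _ => hvarX j), Finset.sum_const, Finset.card_univ,
      Fintype.card_fin, nsmul_eq_mul]
    field_simp
  have hI2 : ProbabilityTheory.variance (fun y : Fin n → ℝ => sigmaHat c y)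
        (sampleLaw n f g)
      = ∫ y, (sigmaHat c y - ∫ y', sigmaHat c y' ∂(sampleLaw n f g)) ^ 2
          ∂(sampleLaw n f g) := by
    rw [ProbabilityTheory.variance_eq_integral hShMem.aemeasurable]
  have hIint : Integrable
      (fun y => (sigmaHat c y - ∫ y', sigmaHat c y' ∂(sampleLaw n f g)) ^ 2)
      (sampleLaw n f g) := by
    have h1 := (hShMem.sub (memLp_const (∫ y', sigmaHat c y' ∂(sampleLaw n f g)))).integrable_sq
    refine h1.congr (ae_of_all _ fun y => ?_)
    simp [Pi.sub_apply]
  have hptwise : ∀ y : Fin n → ℝ, max (sigmaC c f g - 2 * sigmaHat c y) 0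
      ≤ (4 / sigmaC c f g) *
        (sigmaHat c y - ∫ y', sigmaHat c y' ∂(sampleLaw n f g)) ^ 2 := by
    intro y
    rw [hEsh]
    calc max (sigmaC c f g - 2 * sigmaHat c y) 0
        ≤ 4 * (sigmaHat c y - sigmaC c f g) ^ 2 / sigmaC c f g :=
          aux_max_sub_le (sigmaC c f g) (sigmaHat c y) hσpos
      _ = (4 / sigmaC c f g) * (sigmaHat c y - sigmaC c f g) ^ 2 := by ring
  have hstmt2 : (∫ y, max (sigmaC c f g - 2 * sigmaHat c y) 0 ∂(sampleLaw n f g))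
      ≤ 4 * (∫ y, (sigmaHat c y - ∫ y', sigmaHat c y' ∂(sampleLaw n f g)) ^ 2
          ∂(sampleLaw n f g)) / sigmaC c f g := by
    have hmono := integral_mono_of_nonneg
      (ae_of_all _ fun y : Fin n → ℝ =>
        le_max_right (sigmaC c f g - 2 * sigmaHat c y) 0)
      (hIint.const_mul (4 / sigmaC c f g)) (ae_of_all _ hptwise)
    refine hmono.trans (le_of_eq ?_)
    rw [integral_const_mul]
    ring
  have hR0 : ∀ k : ℕ, 0 ≤ RnormSq c g r 0 (k:ℝ) := fun k =>
    integral_nonneg fun t => sq_nonneg _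
  have hsup_le : ∀ y : Fin n → ℝ,
      (⨆ k ∈ Kn c g r n, max (Vfun c f g r n k - Vhat c g r y k) 0)
        ≤ max (sigmaC c f g - 2 * sigmaHat c y) 0 := by
    intro y
    refine Real.iSup_le (fun k => Real.iSup_le (fun hk => ?_) (le_max_right _ 0))
      (le_max_right _ 0)
    refine max_le ?_ (le_max_right _ 0)
    have hRn : RnormSq c g r 0 (k:ℝ) ≤ (n:ℝ) := hk.2
    have hM : sigmaC c f g - 2 * sigmaHat c y
        ≤ max (sigmaC c f g - 2 * sigmaHat c y) 0 := le_max_left _ _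
    have hM0 : (0:ℝ) ≤ max (sigmaC c f g - 2 * sigmaHat c y) 0 := le_max_right _ 0
    rw [Vfun, Vhat, div_sub_div_same, div_le_iff₀ hnR]
    nlinarith [hR0 k, hRn, hM, hM0,
      mul_nonneg (sub_nonneg.mpr hM) (hR0 k),
      mul_nonneg hM0 (sub_nonneg.mpr hRn)]
  have hMint : Integrable (fun y : Fin n → ℝ => max (sigmaC c f g - 2 * sigmaHat c y) 0)
      (sampleLaw n f g) := by
    have h1 : Integrable (fun y : Fin n → ℝ => sigmaC c f g - 2 * sigmaHat c y)
        (sampleLaw n f g) :=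
      (integrable_const (sigmaC c f g)).sub ((hShMem.integrable one_le_two).const_mul 2)
    exact h1.pos_part
  have hsupint : (∫ y, (⨆ k ∈ Kn c g r n, max (Vfun c f g r n k - Vhat c g r y k) 0)
        ∂(sampleLaw n f g))
      ≤ ∫ y, max (sigmaC c f g - 2 * sigmaHat c y) 0 ∂(sampleLaw n f g) :=
    integral_mono_of_nonneg
      (ae_of_all _ fun y => Real.iSup_nonneg fun k =>
        Real.iSup_nonneg fun _ => le_max_right _ 0)
      hMint (ae_of_all _ hsup_le)
  have hvar_le : ProbabilityTheory.variance (fun t : ℝ => t ^ (2 * (c - 1))) μ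
      ≤ ∫ y, y ^ (4 * (c - 1)) ∂μ := by
    refine (ProbabilityTheory.variance_le_expectation_sq
      hφm.aestronglyMeasurable).trans (le_of_eq ?_)
    rw [← hm4eq]
    refine integral_congr_ae (ae_of_all _ fun t => ?_)
    simp [Pi.pow_apply]
  have hI2le : (∫ y, (sigmaHat c y - ∫ y', sigmaHat c y' ∂(sampleLaw n f g)) ^ 2
        ∂(sampleLaw n f g)) ≤ (∫ y, y ^ (4 * (c - 1)) ∂μ) / n := by
    rw [← hI2, hvarSh]
    exact (div_le_div_iff_of_pos_right hnR).mpr hvar_le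
  constructor
  · refine hsupint.trans (hstmt2.trans ?_)
    calc 4 * (∫ y, (sigmaHat c y - ∫ y', sigmaHat c y' ∂(sampleLaw n f g)) ^ 2
          ∂(sampleLaw n f g)) / sigmaC c f g
        ≤ 4 * ((∫ y, y ^ (4 * (c - 1)) ∂μ) / n) / sigmaC c f g := by
          refine (div_le_div_iff_of_pos_right hσpos).mpr ?_
          linarith [hI2le]
      _ = (4 * (∫ y, y ^ (4 * (c - 1)) ∂μ) / sigmaC c f g) / n := by
          rw [← mul_div_assoc, div_div, div_div, mul_comm (n:ℝ) (sigmaC c f g)]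
      _ ≤ (4 * (∫ y, y ^ (4 * (c - 1)) ∂μ) / sigmaC c f g + 1) / n := by
          refine (div_le_div_iff_of_pos_right hnR).mpr ?_
          linarith
  · exact hstmt2


end MultDeconv
end
end
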